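/- Let c ≥ 1 be a real number, b ≥ 2 an integer, and d_{b,c,k} the total number of base-b digits in the concatenation, for n = 1, ..., 2b^{k-1} − 1, of the base-b digit string of n repeated ⌊c^{ℓ_b(n)}⌋ times. Then for every k ≥ 1, the number of occurrences of the digit 1 among the first d_{b,c,k} base-b digits of ξ_{ℕ,b,c} satisfies m_{1,b}(ξ_{ℕ,b,c}; d_{b,c,k}) = Σ_{n=1}^{k-1} ⌊c^n⌋·((n−1)·b^{n−2}·(b−1) + b^{n−1}) + ⌊c^k⌋·((k−1)·b^{k−2} + b^{k−1}). -/

import Mathlib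

open Filter

/-- The `i`-th digit (starting from `i = 0`) of the base-`b` expansion of the real `ξ`. -/
noncomputable def digitOf (b : ℕ) (ξ : ℝ) (i : ℕ) : ℕ :=
  (⌊ξ * (b : ℝ) ^ (i + 1)⌋).toNat % b

/-- `m_{k,b}(ξ; n)`: the number of occurrences of the digit `k` among the first `n`
base-`b` digits of `ξ`. -/
noncomputable def digCount (b : ℕ) (ξ : ℝ) (k n : ℕ) : ℕ :=
  ((Finset.range n).filter fun i => digitOf b ξ i = k).card

/-- The ratio appearing in the definition of (simple) strong normality. -/
noncomputable def snRatio (b : ℕ) (ξ : ℝ) (k n : ℕ) : ℝ :=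
  ((digCount b ξ k n : ℝ) - (n : ℝ) / b) / Real.sqrt (2 * n * Real.log (Real.log n))

/-- `ξ` is simply strongly normal to base `b`. -/
def SimplyStronglyNormal (b : ℕ) (ξ : ℝ) : Prop :=
  ∀ k < b,
    Filter.atTop.limsup (fun n : ℕ => (snRatio b ξ k n : EReal))
        = ((Real.sqrt ((b : ℝ) - 1) / b : ℝ) : EReal) ∧
    Filter.atTop.liminf (fun n : ℕ => (snRatio b ξ k n : EReal))
        = ((-(Real.sqrt ((b : ℝ) - 1) / b) : ℝ) : EReal)

/-- `ξ` is strongly normal to base `b`: simply strongly normal to base `b^m` for all `m ≥ 1`. -/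
def StronglyNormal (b : ℕ) (ξ : ℝ) : Prop :=
  ∀ m : ℕ, 1 ≤ m → SimplyStronglyNormal (b ^ m) ξ

/-- `ℓ_b(n)`: the number of base-`b` digits of `n`. -/
def lenb (b n : ℕ) : ℕ := (Nat.digits b n).length

/-- The base-`b` digit string (most significant digit first) of `a`,
repeated `⌊c ^ ℓ_b(a)⌋` times. -/
noncomputable def block (b : ℕ) (c : ℝ) (a : ℕ) : List ℕ :=
  (List.replicate ⌊c ^ lenb b a⌋₊ (Nat.digits b a).reverse).flatten

/-- The concatenation of the blocks of the first `N` elements of `B` (in increasing order). -/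
noncomputable def prefixDigits (b : ℕ) (c : ℝ) (B : Set ℕ) (N : ℕ) : List ℕ :=
  ((List.range N).map fun n => block b c (Nat.nth (· ∈ B) n)).flatten

/-- The `i`-th digit of the infinite concatenation of the blocks of the elements of `B`. -/
noncomputable def xiDigit (b : ℕ) (c : ℝ) (B : Set ℕ) (i : ℕ) : ℕ :=
  (prefixDigits b c B (i + 1)).getD i 0

/-- `ξ_{B,b,c}`: the real number whose base-`b` expansion is the concatenation, over the
elements `a` of `B` in increasing order, of the base-`b` digits of `a` repeated
`⌊c ^ ℓ_b(a)⌋` times. -/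
noncomputable def xiReal (b : ℕ) (c : ℝ) (B : Set ℕ) : ℝ :=
  ∑' i : ℕ, (xiDigit b c B i : ℝ) / (b : ℝ) ^ (i + 1)

/-- `A(x)`: the number of elements of `A` that are at most `x`. -/
noncomputable def countA (A : Set ℕ) (x : ℕ) : ℕ := Set.ncard {n ∈ A | n ≤ x}

/-- `d_{b,c,k}`: the total number of base-`b` digits in the concatenation, for
`n = 1, …, 2·b^(k-1) − 1`, of the base-`b` digit string of `n` repeated `⌊c^{ℓ_b(n)}⌋` times. -/
noncomputable def dTotal (b : ℕ) (c : ℝ) (k : ℕ) : ℕ :=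
  ∑ n ∈ Finset.Icc 1 (2 * b ^ (k - 1) - 1), ⌊c ^ lenb b n⌋₊ * lenb b n

/-- The closed formula for `d_{b,c,k}`. -/
noncomputable def dFormula (b : ℕ) (c : ℝ) (k : ℕ) : ℕ :=
  ⌊c ^ k⌋₊ * k * b ^ (k - 1) +
    ∑ n ∈ Finset.Icc 1 (k - 1), ⌊c ^ n⌋₊ * n * b ^ (n - 1) * (b - 1)


/-! ### Auxiliary lemmas -/


/-- number of 1-digits of n in base b -/
def fOne (b n : ℕ) : ℕ := (Nat.digits b n).count 1

def GOne (b x : ℕ) : ℕ := ∑ n ∈ Finset.range x, fOne b n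

lemma fOne_rec (hb : 2 ≤ b) (n : ℕ) :
    fOne b n = (if n % b = 1 then 1 else 0) + fOne b (n / b) := by
  rcases Nat.eq_zero_or_pos n with h | h
  · subst h; simp [fOne]
  · rw [fOne, Nat.digits_def' (by omega : 1 < b) h, List.count_cons]
    rw [fOne, add_comm]
    congr 1
    split <;> simp_all

lemma block_sum (hb : 2 ≤ b) (x : ℕ) :
    ∑ r ∈ Finset.range b, fOne b (b * x + r) = 1 + b * fOne b x := by
  have h : ∀ r ∈ Finset.range b, fOne b (b * x + r) = (if r = 1 then 1 else 0) + fOne b x := by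
    intro r hr
    rw [Finset.mem_range] at hr
    rw [fOne_rec hb]
    congr 1
    · congr 1
      rw [Nat.mul_add_mod, Nat.mod_eq_of_lt hr]
    · congr 1
      rw [Nat.mul_add_div (by omega), Nat.div_eq_of_lt hr, add_zero]
  rw [Finset.sum_congr rfl h, Finset.sum_add_distrib,
    Finset.sum_ite_eq' (Finset.range b) 1 (fun _ => 1)]
  simp [Finset.mem_range, (by omega : 1 < b)]

lemma GOne_mul (hb : 2 ≤ b) (x : ℕ) : GOne b (b * x) = x + b * GOne b x := by
  induction x with
  | zero => simp [GOne]
  | succ x ih =>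
    have h1 : b * (x + 1) = b * x + b := by ring
    have h2 : GOne b (b * x + b) = GOne b (b * x) + ∑ r ∈ Finset.range b, fOne b (b * x + r) := by
      rw [GOne, Finset.sum_range_add, GOne]
    rw [h1, h2, block_sum hb, ih]
    simp only [GOne, Finset.sum_range_succ]
    ring

lemma GOne_one : GOne b 1 = 0 := by
  rw [GOne, Finset.sum_range_one]
  simp [fOne]

lemma GOne_two (hb : 2 ≤ b) : GOne b 2 = 1 := by
  have : GOne b 2 = fOne b 0 + fOne b 1 := by
    rw [GOne, Finset.sum_range_succ, Finset.sum_range_one]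
  rw [this]
  simp [fOne, Nat.digits_def' (by omega : 1 < b) (by omega : 0 < 1),
    Nat.mod_eq_of_lt (by omega : 1 < b), Nat.div_eq_of_lt (by omega : 1 < b)]

lemma GOne_pow (hb : 2 ≤ b) (t : ℕ) : GOne b (b ^ (t + 1)) = (t + 1) * b ^ t := by
  induction t with
  | zero =>
    have h : b ^ (0 + 1) = b * 1 := by ring
    rw [h, GOne_mul hb, GOne_one]
    ring
  | succ t ih =>
    have h : b ^ (t + 2) = b * b ^ (t + 1) := by ring
    rw [h, GOne_mul hb, ih]
    ring

lemma GOne_two_pow (hb : 2 ≤ b) (t : ℕ) :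
    GOne b (2 * b ^ (t + 1)) = 2 * (t + 1) * b ^ t + b ^ (t + 1) := by
  induction t with
  | zero =>
    have h : 2 * b ^ (0 + 1) = b * 2 := by ring
    rw [h, GOne_mul hb, GOne_two hb]
    ring
  | succ t ih =>
    have h : 2 * b ^ (t + 2) = b * (2 * b ^ (t + 1)) := by ring
    rw [h, GOne_mul hb, ih]
    ring


lemma lenb_eq (hb : 2 ≤ b) {m n : ℕ} (h1 : b ^ m ≤ n) (h2 : n < b ^ (m + 1)) :
    lenb b n = m + 1 := by
  have hn : n ≠ 0 := by
    have : 0 < b ^ m := pow_pos (by omega) m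
    omega
  rw [lenb, Nat.digits_len b n (by omega) hn, Nat.log_eq_of_pow_le_of_lt_pow h1 h2]

lemma GOne_split (hb : 2 ≤ b) {x y : ℕ} (h : x ≤ y) :
    GOne b x + ∑ n ∈ Finset.Ico x y, fOne b n = GOne b y := by
  rw [GOne, GOne, Finset.range_eq_Ico, Finset.range_eq_Ico]
  exact Finset.sum_Ico_consecutive (fOne b) (Nat.zero_le _) h

lemma claim_pow (hb : 2 ≤ b) (K : ℕ) :
    GOne b (b ^ K) + (K * b ^ (K - 1) * (b - 1) + b ^ K) = GOne b (b ^ (K + 1)) := by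
  obtain ⟨b', rfl⟩ : ∃ b', b = b' + 2 := ⟨b - 2, by omega⟩
  cases K with
  | zero =>
    rw [pow_zero, GOne_one]
    simpa using (GOne_pow hb 0).symm
  | succ t =>
    rw [GOne_pow hb, GOne_pow hb]
    have e1 : b' + 2 - 1 = b' + 1 := rfl
    have e2 : t + 1 - 1 = t := rfl
    rw [e1, e2]
    ring

lemma claim_tail (hb : 2 ≤ b) (t : ℕ) :
    GOne b (b ^ t) + (t * b ^ (t - 1) + b ^ t) = GOne b (2 * b ^ t) := by
  cases t with
  | zero =>
    rw [pow_zero, GOne_one]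
    norm_num [GOne_two hb]
  | succ s =>
    rw [GOne_pow hb, GOne_two_pow hb]
    have e2 : s + 1 - 1 = s := rfl
    rw [e2]
    ring

lemma main_sum (hb : 2 ≤ b) (w : ℕ → ℕ) (K : ℕ) :
    ∑ n ∈ Finset.Ico 1 (b ^ K), w (lenb b n) * fOne b n
      = ∑ m ∈ Finset.Icc 1 K, w m * ((m - 1) * b ^ (m - 2) * (b - 1) + b ^ (m - 1)) := by
  induction K with
  | zero => simp
  | succ K ih =>
    have hle : (1:ℕ) ≤ b ^ K := Nat.one_le_pow _ _ (by omega)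
    have hle2 : b ^ K ≤ b ^ (K+1) := Nat.pow_le_pow_right (by omega) (by omega)
    rw [← Finset.sum_Ico_consecutive _ hle hle2, ih]
    have hlen : ∀ n ∈ Finset.Ico (b^K) (b^(K+1)), w (lenb b n) * fOne b n = w (K+1) * fOne b n := by
      intro n hn
      rw [Finset.mem_Ico] at hn
      rw [lenb_eq hb hn.1 hn.2]
    rw [Finset.sum_congr rfl hlen, ← Finset.mul_sum]
    have hsum : ∑ n ∈ Finset.Ico (b^K) (b^(K+1)), fOne b n = K * b ^ (K-1) * (b-1) + b ^ K := by
      have h1 := GOne_split hb hle2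
      have h2 := claim_pow hb K
      omega
    rw [hsum, Finset.sum_Icc_succ_top (by omega : 1 ≤ K+1)]
    simp [show K + 1 - 2 = K - 1 from by omega]

lemma total_count (hb : 2 ≤ b) (w : ℕ → ℕ) (k : ℕ) (hk : 1 ≤ k) :
    ∑ n ∈ Finset.Ico 1 (2 * b ^ (k - 1)), w (lenb b n) * fOne b n
      = ∑ m ∈ Finset.Icc 1 (k - 1), w m * ((m - 1) * b ^ (m - 2) * (b - 1) + b ^ (m - 1))
        + w k * ((k - 1) * b ^ (k - 2) + b ^ (k - 1)) := by
  obtain ⟨t, rfl⟩ : ∃ t, k = t + 1 := ⟨k - 1, by omega⟩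
  simp only [Nat.add_sub_cancel]
  have hle : (1:ℕ) ≤ b ^ t := Nat.one_le_pow _ _ (by omega)
  have hle2 : b ^ t ≤ 2 * b ^ t := by omega
  rw [← Finset.sum_Ico_consecutive _ hle hle2, main_sum hb w t]
  congr 1
  have hlen : ∀ n ∈ Finset.Ico (b^t) (2*b^t), w (lenb b n) * fOne b n = w (t+1) * fOne b n := by
    intro n hn
    rw [Finset.mem_Ico] at hn
    have h2 : n < b ^ (t+1) := by
      have h3 : 2 * b ^ t ≤ b * b ^ t := Nat.mul_le_mul_right _ (by omega)
      have h4 : b * b ^ t = b ^ (t+1) := by ring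
      omega
    rw [lenb_eq hb hn.1 h2]
  rw [Finset.sum_congr rfl hlen, ← Finset.mul_sum]
  congr 1
  have hA := GOne_split hb hle2
  have hB := claim_tail hb t
  have e : t + 1 - 2 = t - 1 := by omega
  rw [e]
  omega

section ListPart

variable {b : ℕ} {c : ℝ}
lemma nth_posNat (i : ℕ) : Nat.nth (· ∈ {n : ℕ | 0 < n}) i = i + 1 := by
  classical
  have hp : (· ∈ {n : ℕ | 0 < n}) = fun n : ℕ => 0 < n := by
    funext n; simp [Set.mem_setOf_eq]
  rw [hp]
  have hc : Nat.count (fun n : ℕ => 0 < n) (i + 1) = i := by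
    rw [Nat.count_eq_card_filter_range]
    have : (Finset.range (i + 1)).filter (fun n => 0 < n) = Finset.Ico 1 (i + 1) := by
      ext x
      simp [Finset.mem_filter, Finset.mem_range, Finset.mem_Ico]
      omega
    rw [this, Nat.card_Ico]
    omega
  have := Nat.nth_count (p := fun n : ℕ => 0 < n) (n := i + 1) (by omega)
  rwa [hc] at this

lemma prefixDigits_succ (B : Set ℕ) (N : ℕ) :
    prefixDigits b c B (N + 1) = prefixDigits b c B N ++ block b c (Nat.nth (· ∈ B) N) := by
  rw [prefixDigits, List.range_succ]
  simp [prefixDigits]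

lemma prefixDigits_prefix (B : Set ℕ) {N M : ℕ} (h : N ≤ M) :
    prefixDigits b c B N <+: prefixDigits b c B M := by
  induction M, h using Nat.le_induction with
  | base => exact List.prefix_refl _
  | succ M hNM ih =>
    refine ih.trans ?_
    rw [prefixDigits_succ]
    exact List.prefix_append _ _

lemma block_length (a : ℕ) : (block b c a).length = ⌊c ^ lenb b a⌋₊ * lenb b a := by
  simp [block, lenb, List.length_flatten, List.map_replicate, List.sum_replicate]

lemma prefixDigits_length (B : Set ℕ) (N : ℕ) :
    (prefixDigits b c B N).length
      = ∑ n ∈ Finset.range N,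
          ⌊c ^ lenb b (Nat.nth (· ∈ B) n)⌋₊ * lenb b (Nat.nth (· ∈ B) n) := by
  rw [prefixDigits, List.length_flatten, List.map_map]
  rw [show ((List.range N).map (List.length ∘ fun n => block b c (Nat.nth (· ∈ B) n))).sum
      = ∑ n ∈ Finset.range N, (block b c (Nat.nth (· ∈ B) n)).length from rfl]
  exact Finset.sum_congr rfl fun n _ => block_length _

lemma block_length_pos (hb : 2 ≤ b) (hc : 1 ≤ c) {a : ℕ} (ha : 0 < a) :
    0 < (block b c a).length := by
  rw [block_length]
  have h1 : 0 < lenb b a := by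
    rw [lenb]
    simpa [List.length_pos_iff] using Nat.digits_ne_nil_iff_ne_zero.mpr (by omega)
  have h2 : 1 ≤ ⌊c ^ lenb b a⌋₊ :=
    Nat.le_floor (by exact_mod_cast one_le_pow₀ hc)
  positivity

lemma prefixDigits_length_ge (hb : 2 ≤ b) (hc : 1 ≤ c) (N : ℕ) :
    N ≤ (prefixDigits b c {n : ℕ | 0 < n} N).length := by
  induction N with
  | zero => simp
  | succ N ih =>
    rw [prefixDigits_succ, List.length_append]
    have := block_length_pos (b := b) (c := c) hb hc
      (a := Nat.nth (· ∈ {n : ℕ | 0 < n}) N) (by rw [nth_posNat]; omega)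
    omega

lemma getD_of_prefix {l₁ l₂ : List ℕ} (h : l₁ <+: l₂) {i : ℕ} (hi : i < l₁.length) :
    l₁.getD i 0 = l₂.getD i 0 := by
  obtain ⟨t, rfl⟩ := h
  rw [List.getD_append _ _ _ _ hi]

lemma xiDigit_eq_getD (hb : 2 ≤ b) (hc : 1 ≤ c) {N i : ℕ}
    (hi : i < (prefixDigits b c {n : ℕ | 0 < n} N).length) :
    xiDigit b c {n : ℕ | 0 < n} i = (prefixDigits b c {n : ℕ | 0 < n} N).getD i 0 := by
  have hi' : i < (prefixDigits b c {n : ℕ | 0 < n} (i + 1)).length :=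
    lt_of_lt_of_le (Nat.lt_succ_self i) (prefixDigits_length_ge hb hc (i + 1))
  rw [xiDigit]
  rcases le_total N (i + 1) with h | h
  · rw [← getD_of_prefix (prefixDigits_prefix _ h) hi]
  · exact getD_of_prefix (prefixDigits_prefix _ h) hi'

lemma mem_block_lt (hb : 2 ≤ b) {a x : ℕ} (hx : x ∈ block b c a) : x < b := by
  rw [block, List.mem_flatten] at hx
  obtain ⟨l, hl, hxl⟩ := hx
  rw [List.mem_replicate] at hl
  rw [hl.2, List.mem_reverse] at hxl
  exact Nat.digits_lt_base (by omega) hxl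

lemma mem_prefixDigits_lt (hb : 2 ≤ b) {B : Set ℕ} {N x : ℕ}
    (hx : x ∈ prefixDigits b c B N) : x < b := by
  rw [show prefixDigits b c B N = ((List.range N).map fun n => block b c (Nat.nth (· ∈ B) n)).flatten from rfl,
    List.mem_flatten] at hx
  obtain ⟨l, hl, hxl⟩ := hx
  rw [List.mem_map] at hl
  obtain ⟨n, _, rfl⟩ := hl
  exact mem_block_lt hb hxl

lemma xiDigit_lt (hb : 2 ≤ b) (B : Set ℕ) (i : ℕ) : xiDigit b c B i < b := by
  rw [xiDigit]
  rcases lt_or_ge i (prefixDigits b c B (i + 1)).length with h | h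
  · rw [List.getD_eq_getElem _ _ h]
    exact mem_prefixDigits_lt hb (List.getElem_mem h)
  · rw [List.getD_eq_default _ _ h]; omega

lemma digits_base_pow (hb : 2 ≤ b) (t : ℕ) :
    Nat.digits b (b ^ t) = List.replicate t 0 ++ [1] := by
  induction t with
  | zero =>
    rw [pow_zero, Nat.digits_def' (by omega : 1 < b) (by omega : 0 < 1)]
    simp [Nat.mod_eq_of_lt (by omega : 1 < b), Nat.div_eq_of_lt (by omega : 1 < b)]
  | succ t ih =>
    have hpos : 0 < b ^ (t + 1) := pow_pos (by omega) _
    rw [Nat.digits_def' (by omega : 1 < b) hpos, pow_succ]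
    simp [Nat.mul_mod_left, Nat.mul_div_cancel _ (by omega : 0 < b), ih, List.replicate_succ]

lemma block_getD_one (hb : 2 ≤ b) (hc : 1 ≤ c) {t : ℕ} (ht : 1 ≤ t) :
    (block b c (b ^ t)).getD 1 0 = 0 := by
  have hlen : lenb b (b ^ t) = t + 1 := by
    rw [lenb, digits_base_pow hb]
    simp
  have hm : 1 ≤ ⌊c ^ lenb b (b ^ t)⌋₊ :=
    Nat.le_floor (by exact_mod_cast one_le_pow₀ hc)
  obtain ⟨m, hmeq⟩ : ∃ m, ⌊c ^ lenb b (b ^ t)⌋₊ = m + 1 := ⟨_, (Nat.succ_pred_eq_of_pos hm).symm⟩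
  have hrev : (Nat.digits b (b ^ t)).reverse = 1 :: List.replicate t 0 := by
    rw [digits_base_pow hb]
    simp
  rw [block, hmeq, List.replicate_succ, List.flatten_cons, hrev]
  have h1 : (1 : ℕ) < (1 :: List.replicate t 0 : List ℕ).length := by
    simp; omega
  rw [List.getD_append _ _ _ _ h1]
  rcases Nat.exists_eq_add_of_le ht with ⟨s, rfl⟩
  simp [List.replicate_succ]

lemma exists_zero_digit (hb : 2 ≤ b) (hc : 1 ≤ c) (i : ℕ) :
    ∃ j, i < j ∧ xiDigit b c {n : ℕ | 0 < n} j = 0 := by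
  set t := i + 2 with hts
  have h2t : i + 2 < 2 ^ (i + 2) := Nat.lt_two_pow_self
  have hbt : i + 2 ≤ b ^ t := by
    calc i + 2 ≤ 2 ^ (i + 2) := by omega
    _ ≤ b ^ t := Nat.pow_le_pow_left (by omega) _
  set n := b ^ t - 1 with hns
  set L := prefixDigits b c {n : ℕ | 0 < n} n with hLs
  have hnth : Nat.nth (· ∈ {n : ℕ | 0 < n}) n = b ^ t := by
    rw [nth_posNat]; omega
  have hsucc : prefixDigits b c {n : ℕ | 0 < n} (n + 1) = L ++ block b c (b ^ t) := by
    rw [prefixDigits_succ, hnth]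
  have hlenblk : (block b c (b ^ t)).length = ⌊c ^ lenb b (b ^ t)⌋₊ * (t + 1) := by
    rw [block_length]
    congr 1
    rw [lenb, digits_base_pow hb]
    simp
  have hm : 1 ≤ ⌊c ^ lenb b (b ^ t)⌋₊ :=
    Nat.le_floor (by exact_mod_cast one_le_pow₀ hc)
  have hblk2 : 2 ≤ (block b c (b ^ t)).length := by
    rw [hlenblk]
    have : t + 1 ≤ ⌊c ^ lenb b (b ^ t)⌋₊ * (t + 1) := Nat.le_mul_of_pos_left _ hm
    omega
  have hLn : n ≤ L.length := prefixDigits_length_ge hb hc n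
  refine ⟨L.length + 1, by omega, ?_⟩
  have hplt : L.length + 1 < (prefixDigits b c {n : ℕ | 0 < n} (n + 1)).length := by
    rw [hsucc, List.length_append]; omega
  rw [xiDigit_eq_getD hb hc hplt, hsucc,
    List.getD_append_right _ _ _ _ (by omega)]
  have : L.length + 1 - L.length = 1 := by omega
  rw [this]
  exact block_getD_one hb hc (by omega)

lemma card_filter_getD (k : ℕ) (L : List ℕ) :
    ((Finset.range L.length).filter fun i => L.getD i 0 = k).card = L.count k := by
  induction L with
  | nil => simp
  | cons a L ih =>
    rw [Finset.card_filter, List.length_cons, Finset.sum_range_succ']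
    simp only [List.getD_cons_succ, List.getD_cons_zero]
    have : (if a = k then 1 else 0) = (if (a == k) = true then 1 else 0) := by
      split <;> simp_all
    rw [← Finset.card_filter, ih, List.count_cons, this]

lemma block_count (a : ℕ) : (block b c a).count 1 = ⌊c ^ lenb b a⌋₊ * (Nat.digits b a).count 1 := by
  rw [block, List.count_flatten, List.map_replicate, List.count_reverse, List.sum_replicate,
    smul_eq_mul]

lemma prefixDigits_count (N : ℕ) (B : Set ℕ) :
    (prefixDigits b c B N).count 1
      = ∑ n ∈ Finset.range N,
          ⌊c ^ lenb b (Nat.nth (· ∈ B) n)⌋₊ * (Nat.digits b (Nat.nth (· ∈ B) n)).count 1 := by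
  rw [show prefixDigits b c B N = ((List.range N).map fun n => block b c (Nat.nth (· ∈ B) n)).flatten from rfl,
    List.count_flatten, List.map_map]
  rw [show ((List.range N).map (List.count 1 ∘ fun n => block b c (Nat.nth (· ∈ B) n))).sum
      = ∑ n ∈ Finset.range N, (block b c (Nat.nth (· ∈ B) n)).count 1 from rfl]
  exact Finset.sum_congr rfl fun n _ => block_count _

end ListPart

section Ana

variable {b : ℕ}

lemma summable_digits (hb : 2 ≤ b) (d : ℕ → ℕ) (hd : ∀ i, d i < b) :
    Summable (fun j : ℕ => (d j : ℝ) / (b : ℝ) ^ (j + 1)) := by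
  have hb1 : (1 : ℝ) < b := by exact_mod_cast (by omega : 1 < b)
  have hgeo : Summable (fun j : ℕ => ((b : ℝ)⁻¹) ^ j) :=
    summable_geometric_of_lt_one (by positivity) (inv_lt_one_of_one_lt₀ hb1)
  refine Summable.of_nonneg_of_le (fun j => by positivity) (fun j => ?_)
    ((hgeo.mul_left ((b : ℝ) * (b : ℝ)⁻¹)))
  have hpos : (0 : ℝ) < (b : ℝ) ^ (j + 1) := by positivity
  have h1 : (d j : ℝ) ≤ (b : ℝ) := by exact_mod_cast (hd j).le
  calc (d j : ℝ) / (b : ℝ) ^ (j + 1) ≤ (b : ℝ) / (b : ℝ) ^ (j + 1) := by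
        exact div_le_div_of_nonneg_right h1 hpos.le
    _ = (b : ℝ) * (b : ℝ)⁻¹ * ((b : ℝ)⁻¹) ^ j := by
        rw [div_eq_mul_inv, ← inv_pow, pow_succ']
        ring

lemma tsum_geom_aux (hb : 2 ≤ b) :
    ∑' j : ℕ, ((b : ℝ) - 1) / (b : ℝ) ^ (j + 1) = 1 := by
  have hb1 : (1 : ℝ) < b := by exact_mod_cast (by omega : 1 < b)
  have h0 : (0 : ℝ) ≤ (b : ℝ)⁻¹ := by positivity
  have h1 : (b : ℝ)⁻¹ < 1 := inv_lt_one_of_one_lt₀ hb1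
  have heq : ∀ j : ℕ, ((b : ℝ) - 1) / (b : ℝ) ^ (j + 1)
      = (((b : ℝ) - 1) * (b : ℝ)⁻¹) * ((b : ℝ)⁻¹) ^ j := by
    intro j
    rw [div_eq_mul_inv, ← inv_pow, pow_succ']
    ring
  rw [tsum_congr heq, tsum_mul_left, tsum_geometric_of_lt_one h0 h1]
  have hbne : (b : ℝ) ≠ 0 := by positivity
  have hbne1 : (b : ℝ) - 1 ≠ 0 := by
    intro h
    have : (b : ℝ) = 1 := by linarith
    linarith
  have h2 : 1 - (b : ℝ)⁻¹ = ((b : ℝ) - 1) / b := by field_simp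
  rw [h2]
  field_simp

lemma digitOf_tsum (hb : 2 ≤ b) (d : ℕ → ℕ) (hd : ∀ i, d i < b)
    (hz : ∀ i, ∃ j, i < j ∧ d j = 0) (i : ℕ) :
    digitOf b (∑' j : ℕ, (d j : ℝ) / (b : ℝ) ^ (j + 1)) i = d i := by
  have hb1 : (1 : ℝ) < b := by exact_mod_cast (by omega : 1 < b)
  have hbne : (b : ℝ) ≠ 0 := by positivity
  have hsumf := summable_digits hb d hd
  set f : ℕ → ℝ := fun j => (d j : ℝ) / (b : ℝ) ^ (j + 1) with hf
  -- the tail sequence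
  set u : ℕ → ℝ := fun j => (d (j + (i + 1)) : ℝ) / (b : ℝ) ^ (j + 1) with hu
  have hsumshift : Summable (fun j => f (j + (i + 1))) :=
    (summable_nat_add_iff (i + 1)).mpr hsumf
  have hsumu : Summable u := by
    refine (hsumshift.mul_right ((b : ℝ) ^ (i + 1))).congr fun j => ?_
    have e : (b:ℝ) ^ (j + (i + 1) + 1) = (b:ℝ) ^ (j + 1) * (b:ℝ) ^ (i + 1) := by
      rw [← pow_add]
      congr 1
      omega
    rw [hf, hu]
    simp only []
    rw [e]
    have hx : ((b:ℝ) ^ (j + 1)) ≠ 0 := by positivity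
    have hy : ((b:ℝ) ^ (i + 1)) ≠ 0 := by positivity
    field_simp
  -- tail value in [0, 1)
  have hcast : ((b - 1 : ℕ) : ℝ) = (b : ℝ) - 1 := by
    rw [Nat.cast_sub (show 1 ≤ b from by omega), Nat.cast_one]
  have hg : Summable (fun j : ℕ => ((b : ℝ) - 1) / (b : ℝ) ^ (j + 1)) :=
    (summable_digits hb (fun _ => b - 1) (fun _ => Nat.sub_lt (by omega) (by omega))).congr
      (fun j => by simp only [hcast])
  have hu_nonneg : (0 : ℝ) ≤ ∑' j, u j := tsum_nonneg fun j => by positivity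
  have hu_lt : ∑' j, u j < 1 := by
    obtain ⟨jz, hjz, hdz⟩ := hz i
    have hJ : jz - (i + 1) + (i + 1) = jz := by omega
    have hlt : u (jz - (i + 1)) < ((b : ℝ) - 1) / (b : ℝ) ^ (jz - (i + 1) + 1) := by
      rw [hu]
      simp only []
      rw [hJ, hdz]
      have : (0 : ℝ) < ((b : ℝ) - 1) / (b : ℝ) ^ (jz - (i + 1) + 1) := by
        apply div_pos (by linarith) (by positivity)
      simpa using this
    have hle : ∀ j, u j ≤ ((b : ℝ) - 1) / (b : ℝ) ^ (j + 1) := by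
      intro j
      apply div_le_div_of_nonneg_right _ (by positivity)
      have := hd (j + (i + 1))
      have h2 : (d (j + (i + 1)) : ℝ) ≤ (b : ℝ) - 1 := by
        have : d (j + (i + 1)) + 1 ≤ b := by omega
        have := (Nat.cast_le (α := ℝ)).mpr this
        push_cast at this
        linarith
      exact h2
    calc ∑' j, u j < ∑' j, ((b : ℝ) - 1) / (b : ℝ) ^ (j + 1) :=
          Summable.tsum_lt_tsum hle hlt hsumu hg
      _ = 1 := tsum_geom_aux hb
  -- split the sum
  set S : ℕ := ∑ j ∈ Finset.range (i + 1), d j * b ^ (i - j) with hS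
  have hsplit : (∑' j, f j) * (b : ℝ) ^ (i + 1) = (S : ℝ) + ∑' j, u j := by
    rw [← Summable.sum_add_tsum_nat_add (i + 1) hsumf, add_mul, ← tsum_mul_right]
    congr 1
    · rw [Finset.sum_mul, hS]
      push_cast
      refine Finset.sum_congr rfl fun j hj => ?_
      rw [Finset.mem_range] at hj
      have hij : (j + 1) + (i - j) = i + 1 := by omega
      rw [hf]
      simp only []
      rw [← hij, pow_add]
      field_simp
      ring
    · refine tsum_congr fun j => ?_
      have e : (b:ℝ) ^ (j + (i + 1) + 1) = (b:ℝ) ^ (j + 1) * (b:ℝ) ^ (i + 1) := by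
        rw [← pow_add]
        congr 1
        omega
      rw [hf, hu]
      simp only []
      rw [e]
      have hx : ((b:ℝ) ^ (j + 1)) ≠ 0 := by positivity
      have hy : ((b:ℝ) ^ (i + 1)) ≠ 0 := by positivity
      field_simp
  have hfloor : ⌊(∑' j, f j) * (b : ℝ) ^ (i + 1)⌋ = (S : ℤ) := by
    rw [hsplit, Int.floor_eq_iff]
    constructor
    · push_cast; linarith
    · push_cast; linarith
  have hmod : S % b = d i := by
    rw [hS, Finset.sum_range_succ, Nat.sub_self, pow_zero, mul_one]
    have : ∑ j ∈ Finset.range i, d j * b ^ (i - j)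
        = b * ∑ j ∈ Finset.range i, d j * b ^ (i - j - 1) := by
      rw [Finset.mul_sum]
      refine Finset.sum_congr rfl fun j hj => ?_
      rw [Finset.mem_range] at hj
      obtain ⟨e, he⟩ : ∃ e, i - j = e + 1 := ⟨i - j - 1, by omega⟩
      rw [he]
      simp only [Nat.add_sub_cancel]
      rw [pow_succ]
      ring
    rw [this, add_comm, Nat.add_mul_mod_self_left, Nat.mod_eq_of_lt (hd i)]
  rw [digitOf, hfloor]
  simpa using hmod

end Ana

/-- The exact count of the digit `1` among the first `d_{b,c,k}` base-`b` digits of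
`ξ_{ℕ,b,c}`. -/
theorem digCount_one_champernowne_eq (b : ℕ) (hb : 2 ≤ b) (c : ℝ) (hc : 1 ≤ c)
    (k : ℕ) (hk : 1 ≤ k) :
    digCount b (xiReal b c {n : ℕ | 0 < n}) 1 (dTotal b c k) =
      ∑ n ∈ Finset.Icc 1 (k - 1),
          ⌊c ^ n⌋₊ * ((n - 1) * b ^ (n - 2) * (b - 1) + b ^ (n - 1))
        + ⌊c ^ k⌋₊ * ((k - 1) * b ^ (k - 2) + b ^ (k - 1)) := by
  have hpk : 1 ≤ b ^ (k - 1) := Nat.one_le_pow _ _ (by omega)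
  set B : Set ℕ := {n : ℕ | 0 < n} with hB
  have hdig : ∀ i, digitOf b (xiReal b c B) i = xiDigit b c B i := fun i =>
    digitOf_tsum hb (xiDigit b c B) (fun j => xiDigit_lt hb B j)
      (fun j => exists_zero_digit hb hc j) i
  set M : ℕ := 2 * b ^ (k - 1) - 1 with hM
  have hM1 : M + 1 = 2 * b ^ (k - 1) := by omega
  set L : List ℕ := prefixDigits b c B M with hL
  have hshift : ∀ g : ℕ → ℕ,
      ∑ n ∈ Finset.Icc 1 M, g n = ∑ n ∈ Finset.range M, g (n + 1) := by
    intro g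
    rw [← Finset.Ico_add_one_right_eq_Icc, Finset.sum_Ico_eq_sum_range]
    exact Finset.sum_congr (by norm_num) fun n _ => by rw [add_comm]
  have hlen : dTotal b c k = L.length := by
    rw [dTotal, hL, prefixDigits_length, ← hM, hshift]
    refine Finset.sum_congr rfl fun n _ => ?_
    rw [nth_posNat]
  have h1 : digCount b (xiReal b c B) 1 (dTotal b c k) = L.count 1 := by
    rw [digCount, hlen]
    have hcong : ∀ i ∈ Finset.range L.length,
        (digitOf b (xiReal b c B) i = 1) ↔ (L.getD i 0 = 1) := by
      intro i hi
      rw [Finset.mem_range] at hi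
      rw [hdig i, hL, xiDigit_eq_getD hb hc (by rw [← hL]; exact hi)]
    rw [Finset.filter_congr hcong, card_filter_getD]
  have h2 : L.count 1
      = ∑ n ∈ Finset.Ico 1 (2 * b ^ (k - 1)), ⌊c ^ lenb b n⌋₊ * fOne b n := by
    rw [hL, prefixDigits_count, ← hM1]
    rw [show Finset.Ico 1 (M + 1) = Finset.Icc 1 M from Finset.Ico_add_one_right_eq_Icc 1 M, hshift]
    refine Finset.sum_congr rfl fun n _ => ?_
    rw [nth_posNat]
    rfl
  rw [h1, h2]
  exact total_count hb (fun m => ⌊c ^ m⌋₊) k hk
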